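/- Let λ > 0, m ≥ 2, let x_1 < x_2 < … < x_m be real numbers and w_1, …, w_m real weights. For 1 ≤ i ≤ m and j ≥ 0 define Φ(i,j) ∈ ℝ ∪ {−∞} as the supremum over all index chains 1 = v_0 < v_1 < … < v_j ≤ i satisfying x_{v_t} − x_{v_{t−1}} ≥ 2λ for every 1 ≤ t ≤ j, of Σ_{t=1}^{j} w_{v_t} (with Φ(i,j) = −∞ if no such chain exists, and Φ(i,0) = 0). For i ≥ 2 let p(i) be the largest index q < i with x_i − x_q ≥ 2λ, when such q exists. Then for all 2 ≤ i ≤ m and j ≥ 1: if p(i) exists, Φ(i,j) = max( Φ(i−1, j), Φ(p(i), j−1) + w_i ), and if p(i) does not exist, Φ(i,j) = Φ(i−1, j). -/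

import Mathlib

/-- `Phi lam x w i j` is the maximum weight of a `j`-link path from vertex `1`
within the first `i` vertices: the supremum (in `WithBot ℝ`, i.e. `ℝ ∪ {−∞}`, with
`sSup ∅ = ⊥`) over all index chains `1 = v 0 < v 1 < … < v j ≤ i` with
`x (v t) − x (v (t−1)) ≥ 2λ` for all `1 ≤ t ≤ j`, of `Σ_{t=1}^{j} w (v t)`. -/
noncomputable def Phi (lam : ℝ) (x w : ℕ → ℝ) (i j : ℕ) : WithBot ℝ :=
  sSup {s : WithBot ℝ | ∃ v : ℕ → ℕ, v 0 = 1 ∧ (∀ t, t < j → v t < v (t + 1)) ∧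
    v j ≤ i ∧ (∀ t, 1 ≤ t → t ≤ j → 2 * lam ≤ x (v t) - x (v (t - 1))) ∧
    s = ((∑ t ∈ Finset.Icc 1 j, w (v t) : ℝ) : WithBot ℝ)}

namespace Stmt9Aux

/-- The set of valid chains. -/
def Chains (lam : ℝ) (x : ℕ → ℝ) (i j : ℕ) : Set (ℕ → ℕ) :=
  {v | v 0 = 1 ∧ (∀ t, t < j → v t < v (t + 1)) ∧ v j ≤ i ∧
    (∀ t, 1 ≤ t → t ≤ j → 2 * lam ≤ x (v t) - x (v (t - 1)))}

/-- The real-valued set of chain weights. -/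
def R (lam : ℝ) (x w : ℕ → ℝ) (i j : ℕ) : Set ℝ :=
  (fun v : ℕ → ℕ => ∑ t ∈ Finset.Icc 1 j, w (v t)) '' Chains lam x i j

lemma Phi_eq (lam : ℝ) (x w : ℕ → ℝ) (i j : ℕ) :
    Phi lam x w i j = sSup ((fun r : ℝ => (r : WithBot ℝ)) '' R lam x w i j) := by
  unfold Phi R Chains
  congr 1
  ext s
  constructor
  · rintro ⟨v, h1, h2, h3, h4, rfl⟩
    exact ⟨_, ⟨v, ⟨h1, h2, h3, h4⟩, rfl⟩, rfl⟩
  · rintro ⟨r, ⟨v, ⟨h1, h2, h3, h4⟩, rfl⟩, rfl⟩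
    exact ⟨v, h1, h2, h3, h4, rfl⟩

lemma chain_mono {v : ℕ → ℕ} {j : ℕ} (h : ∀ t, t < j → v t < v (t + 1)) :
    ∀ a b, a ≤ b → b ≤ j → v a ≤ v b := by
  intro a b hab hbj
  induction b with
  | zero =>
    have : a = 0 := Nat.le_zero.mp hab
    simp [this]
  | succ n ih =>
    rcases Nat.lt_or_ge a (n + 1) with h' | h'
    · exact (ih (Nat.lt_succ_iff.mp h') (by omega)).trans (h n (by omega)).le
    · have : a = n + 1 := le_antisymm hab h'
      simp [this]

lemma R_bdd (lam : ℝ) (x w : ℕ → ℝ) (i j : ℕ) : BddAbove (R lam x w i j) := by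
  refine ⟨(Finset.Icc 1 j).card •
      (Finset.range (i + 1)).sup' ⟨0, by simp⟩ w, ?_⟩
  rintro r ⟨v, ⟨h1, h2, h3, h4⟩, rfl⟩
  calc ∑ t ∈ Finset.Icc 1 j, w (v t)
      ≤ ∑ _t ∈ Finset.Icc 1 j, (Finset.range (i + 1)).sup' ⟨0, by simp⟩ w := by
        apply Finset.sum_le_sum
        intro t ht
        apply Finset.le_sup'
        have ht' : t ≤ j := (Finset.mem_Icc.mp ht).2
        have : v t ≤ v j := chain_mono h2 t j ht' le_rfl
        simp only [Finset.mem_range]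
        omega
    _ = _ := Finset.sum_const _

lemma x_mono {m : ℕ} {x : ℕ → ℝ} (hx : ∀ i, 1 ≤ i → i < m → x i < x (i + 1)) :
    ∀ a b, 1 ≤ a → a ≤ b → b ≤ m → x a ≤ x b := by
  intro a b ha hab hbm
  induction b with
  | zero => omega
  | succ n ih =>
    rcases Nat.lt_or_ge a (n + 1) with h' | h'
    · have h1 := ih (by omega) (by omega)
      have h2 := hx n (by omega) (by omega)
      linarith
    · have : a = n + 1 := by omega
      simp [this]

lemma R_no_p (lam : ℝ) (x w : ℕ → ℝ) (i j : ℕ) (hi : 2 ≤ i) (hj : 1 ≤ j)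
    (hnone : ¬ ∃ q, 1 ≤ q ∧ q < i ∧ 2 * lam ≤ x i - x q) :
    R lam x w i j = R lam x w (i - 1) j := by
  apply subset_antisymm
  · rintro r ⟨v, ⟨h1, h2, h3, h4⟩, rfl⟩
    refine ⟨v, ⟨h1, h2, ?_, h4⟩, rfl⟩
    by_contra hvj
    have hvji : v j = i := by omega
    have hq1 : 1 ≤ v (j - 1) := by
      have := chain_mono h2 0 (j - 1) (by omega) (by omega)
      omega
    have hqlt : v (j - 1) < i := by
      have h5 := h2 (j - 1) (by omega)
      have e : j - 1 + 1 = j := by omega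
      rw [e] at h5
      omega
    have hgap := h4 j hj le_rfl
    rw [hvji] at hgap
    exact hnone ⟨v (j - 1), hq1, hqlt, hgap⟩
  · rintro r ⟨v, ⟨h1, h2, h3, h4⟩, rfl⟩
    exact ⟨v, ⟨h1, h2, by omega, h4⟩, rfl⟩

lemma R_p (lam : ℝ) (x w : ℕ → ℝ) (m i j p : ℕ) (hi : 2 ≤ i) (him : i ≤ m)
    (hj : 1 ≤ j) (hx : ∀ i, 1 ≤ i → i < m → x i < x (i + 1))
    (hp1 : 1 ≤ p) (hpi : p < i) (hgap : 2 * lam ≤ x i - x p)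
    (hmax : ∀ q, 1 ≤ q → q < i → 2 * lam ≤ x i - x q → q ≤ p) :
    R lam x w i j = R lam x w (i - 1) j ∪ (fun r => r + w i) '' R lam x w p (j - 1) := by
  apply subset_antisymm
  · rintro r ⟨v, ⟨h1, h2, h3, h4⟩, rfl⟩
    by_cases hvj : v j ≤ i - 1
    · exact Or.inl ⟨v, ⟨h1, h2, hvj, h4⟩, rfl⟩
    · right
      have hvji : v j = i := by omega
      have hq1 : 1 ≤ v (j - 1) := by
        have := chain_mono h2 0 (j - 1) (by omega) (by omega)
        omega
      have hqlt : v (j - 1) < i := by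
        have h5 := h2 (j - 1) (by omega)
        have e : j - 1 + 1 = j := by omega
        rw [e] at h5
        omega
      have hg := h4 j hj le_rfl
      rw [hvji] at hg
      have hqle : v (j - 1) ≤ p := hmax _ hq1 hqlt hg
      refine ⟨∑ t ∈ Finset.Icc 1 (j - 1), w (v t),
        ⟨v, ⟨h1, fun t ht => h2 t (by omega), hqle,
          fun t ht1 ht2 => h4 t ht1 (by omega)⟩, rfl⟩, ?_⟩
      simp only
      conv_rhs => rw [show j = (j - 1) + 1 from by omega]
      rw [Finset.sum_Icc_succ_top (by omega), show j - 1 + 1 = j from by omega, hvji]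
  · rintro r (⟨v, ⟨h1, h2, h3, h4⟩, rfl⟩ | ⟨r', ⟨u, ⟨h1, h2, h3, h4⟩, rfl⟩, rfl⟩)
    · exact ⟨v, ⟨h1, h2, by omega, h4⟩, rfl⟩
    · set v : ℕ → ℕ := fun t => if t < j then u t else i with hv
      have hvt : ∀ t, t < j → v t = u t := fun t ht => if_pos ht
      have hvj : v j = i := if_neg (lt_irrefl j)
      have hu1 : ∀ t, t ≤ j - 1 → 1 ≤ u t := by
        intro t ht
        have := chain_mono h2 0 t (by omega) ht
        omega
      refine ⟨v, ⟨?_, ?_, ?_, ?_⟩, ?_⟩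
      · rw [hvt 0 (by omega), h1]
      · intro t ht
        rcases Nat.lt_or_ge (t + 1) j with h' | h'
        · rw [hvt t (by omega), hvt (t + 1) h']
          exact h2 t (by omega)
        · have htj : t + 1 = j := by omega
          rw [hvt t (by omega), htj, hvj]
          have ht1 : t = j - 1 := by omega
          have : u t ≤ p := ht1 ▸ h3
          omega
      · rw [hvj]
      · intro t ht1 ht2
        rcases Nat.lt_or_ge t j with h' | h'
        · rw [hvt t h', hvt (t - 1) (by omega)]
          exact h4 t ht1 (by omega)
        · have htj : t = j := by omega
          subst htj
          rw [hvj, hvt (t - 1) (by omega)]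
          have hxle : x (u (t - 1)) ≤ x p :=
            x_mono hx _ _ (hu1 _ le_rfl) h3 (by omega)
          linarith
      · simp only
        conv_lhs => rw [show j = (j - 1) + 1 from by omega]
        rw [Finset.sum_Icc_succ_top (by omega), show j - 1 + 1 = j from by omega, hvj]
        congr 1
        apply Finset.sum_congr rfl
        intro t ht
        rw [hvt t (by have := (Finset.mem_Icc.mp ht).2; omega)]

lemma bdd_coe {A : Set ℝ} (h : BddAbove A) :
    BddAbove ((fun r : ℝ => (r : WithBot ℝ)) '' A) := by
  obtain ⟨B, hB⟩ := h
  refine ⟨(B : WithBot ℝ), ?_⟩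
  rintro s ⟨r, hr, rfl⟩
  exact WithBot.coe_le_coe.mpr (hB hr)

lemma bdd_add {A : Set ℝ} (h : BddAbove A) (c : ℝ) :
    BddAbove ((fun r => r + c) '' A) := by
  obtain ⟨B, hB⟩ := h
  refine ⟨B + c, ?_⟩
  rintro s ⟨r, hr, rfl⟩
  exact add_le_add_left (hB hr) c

lemma sSup_union' {S T : Set (WithBot ℝ)} (hS : BddAbove S) (hT : BddAbove T) :
    sSup (S ∪ T) = max (sSup S) (sSup T) := by
  rcases S.eq_empty_or_nonempty with rfl | hSne
  · rw [Set.empty_union, WithBot.sSup_empty, max_eq_right bot_le]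
  · rcases T.eq_empty_or_nonempty with rfl | hTne
    · rw [Set.union_empty, WithBot.sSup_empty, max_eq_left bot_le]
    · rw [csSup_union hS hSne hT hTne]

lemma sSup_coe_add {B : Set ℝ} (hB : BddAbove B) (c : ℝ) :
    sSup ((fun r : ℝ => (r : WithBot ℝ)) '' ((fun r => r + c) '' B)) =
      sSup ((fun r : ℝ => (r : WithBot ℝ)) '' B) + (c : WithBot ℝ) := by
  rcases B.eq_empty_or_nonempty with rfl | hBne
  · simp [WithBot.sSup_empty]
  · have h1 : ((fun r => r + c) '' B).Nonempty := hBne.image _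
    have h2 : BddAbove ((fun r => r + c) '' B) := bdd_add hB c
    rw [← WithBot.coe_sSup' h1 h2, ← WithBot.coe_sSup' hBne hB, ← WithBot.coe_add,
      WithBot.coe_inj]
    have := (OrderIso.addRight c).map_csSup' hBne hB
    simpa using this.symm

end Stmt9Aux

open Stmt9Aux in
/-- Let `λ > 0`, `m ≥ 2`, let `x 1 < x 2 < … < x m` be the sorted coordinates of the
points on `ℓ` and `w i` the weight of the disk centered at point `i`.  For all
`2 ≤ i ≤ m` and `j ≥ 1`: if `p = p(i)` is the largest index `q < i` with
`x i − x q ≥ 2λ`, then `Φ(i,j) = max (Φ(i−1,j)) (Φ(p,j−1) + w i)`; and if no such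
index exists, then `Φ(i,j) = Φ(i−1,j)`. -/
theorem stmt_9 (lam : ℝ) (hlam : 0 < lam) (m : ℕ) (hm : 2 ≤ m) (x w : ℕ → ℝ)
    (hx : ∀ i, 1 ≤ i → i < m → x i < x (i + 1))
    (i j : ℕ) (hi2 : 2 ≤ i) (him : i ≤ m) (hj : 1 ≤ j) :
    (∀ p : ℕ, 1 ≤ p → p < i → 2 * lam ≤ x i - x p →
        (∀ q, 1 ≤ q → q < i → 2 * lam ≤ x i - x q → q ≤ p) →
        Phi lam x w i j =
          max (Phi lam x w (i - 1) j) (Phi lam x w p (j - 1) + (w i : WithBot ℝ))) ∧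
      ((¬ ∃ q, 1 ≤ q ∧ q < i ∧ 2 * lam ≤ x i - x q) →
        Phi lam x w i j = Phi lam x w (i - 1) j) := by
  constructor
  · intro p hp1 hpi hgap hmax
    rw [Phi_eq, Phi_eq, Phi_eq,
      R_p lam x w m i j p hi2 him hj hx hp1 hpi hgap hmax, Set.image_union,
      sSup_union' (bdd_coe (R_bdd lam x w (i - 1) j))
        (bdd_coe (bdd_add (R_bdd lam x w p (j - 1)) (w i))),
      sSup_coe_add (R_bdd lam x w p (j - 1)) (w i)]
  · intro hnone
    rw [Phi_eq, Phi_eq, R_no_p lam x w i j hi2 hj hnone]
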